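/- Let $X$ be a quasi-Banach function space over a separable and $\sigma$-finite measure space $\Omega$. Then $X$ is separable (as a topological space) if and only if $X$ is order continuous. -/

import Mathlib

open MeasureTheory Filter Topology Finset

noncomputable section

/-- A quasi-Banach function space over a measure space `(α, μ)`:
a quasi-Banach space of (a.e. classes of) measurable functions with a weak
order unit and the lattice property. -/
structure QBFS (α : Type*) [MeasurableSpace α] (μ : MeasureTheory.Measure α) where
  Mem : (α → ℂ) → Prop
  qnorm : (α → ℂ) → ℝ
  Cq : ℝ
  one_le_Cq : 1 ≤ Cq
  mem_aemeasurable : ∀ f, Mem f → AEMeasurable f μ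
  mem_congr : ∀ f g, Mem f → f =ᵐ[μ] g → Mem g
  qnorm_congr : ∀ f g, f =ᵐ[μ] g → qnorm f = qnorm g
  qnorm_nonneg : ∀ f, 0 ≤ qnorm f
  qnorm_eq_zero_iff : ∀ f, Mem f → (qnorm f = 0 ↔ f =ᵐ[μ] 0)
  qnorm_smul : ∀ (c : ℂ) (f), qnorm (c • f) = ‖c‖ * qnorm f
  add_mem : ∀ f g, Mem f → Mem g → Mem (f + g)
  smul_mem : ∀ (c : ℂ) (f), Mem f → Mem (c • f)
  qnorm_add_le : ∀ f g, Mem f → Mem g → qnorm (f + g) ≤ Cq * (qnorm f + qnorm g)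
  exists_weak_unit : ∃ f, Mem f ∧ ∀ᵐ ω ∂μ, 0 < ‖f ω‖
  lattice_mem : ∀ f g, Mem f → AEMeasurable g μ →
    (∀ᵐ ω ∂μ, ‖g ω‖ ≤ ‖f ω‖) → Mem g
  lattice_qnorm : ∀ f g, Mem f →
    (∀ᵐ ω ∂μ, ‖g ω‖ ≤ ‖f ω‖) → qnorm g ≤ qnorm f
  complete : ∀ u : ℕ → α → ℂ, (∀ n, Mem (u n)) →
    (∀ ε : ℝ, 0 < ε → ∃ N, ∀ m ≥ N, ∀ n ≥ N, qnorm (u m - u n) ≤ ε) →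
    ∃ f, Mem f ∧ Tendsto (fun n => qnorm (u n - f)) atTop (𝓝 0)

variable {α : Type*} [MeasurableSpace α] {μ : MeasureTheory.Measure α}

/-- Membership in the sum space `X₀ + X₁`. -/
def SumMem (X0 X1 : QBFS α μ) (f : α → ℂ) : Prop :=
  ∃ f0 f1, X0.Mem f0 ∧ X1.Mem f1 ∧ f =ᵐ[μ] f0 + f1

/-- The set of numbers `‖f₀‖ + ‖f₁‖` over decompositions `f = f₀ + f₁`. -/
def sumNormSet (X0 X1 : QBFS α μ) (f : α → ℂ) : Set ℝ :=
  {r | ∃ f0 f1, X0.Mem f0 ∧ X1.Mem f1 ∧ f =ᵐ[μ] f0 + f1 ∧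
    r = X0.qnorm f0 + X1.qnorm f1}

/-- The quasi-norm of the sum space `X₀ + X₁`. -/
def sumNorm (X0 X1 : QBFS α μ) (f : α → ℂ) : ℝ := sInf (sumNormSet X0 X1 f)

/-- Topological separability of a (quasi-normed) function space given by a
membership predicate and a quasi-norm: there is a countable subset which is
dense with respect to the quasi-norm. -/
def SeparableFS (Mem : (α → ℂ) → Prop) (q : (α → ℂ) → ℝ) : Prop :=
  ∃ D : Set (α → ℂ), D.Countable ∧ (∀ d ∈ D, Mem d) ∧
    ∀ f, Mem f → ∀ ε : ℝ, 0 < ε → ∃ d ∈ D, q (f - d) < ε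

/-- Order continuity of a function space given by a membership predicate and a
quasi-norm: whenever a sequence of nonnegative members decreases pointwise
a.e. to `0`, its quasi-norms tend to `0`. -/
def OrderContFS (μ : MeasureTheory.Measure α) (Mem : (α → ℂ) → Prop)
    (q : (α → ℂ) → ℝ) : Prop :=
  ∀ f : ℕ → α → ℂ, (∀ n, Mem (f n)) →
    (∀ᵐ ω ∂μ, (∀ n, (f n ω).im = 0 ∧ 0 ≤ (f n ω).re ∧
        (f (n + 1) ω).re ≤ (f n ω).re) ∧
      Tendsto (fun n => (f n ω).re) atTop (𝓝 0)) →
    Tendsto (fun n => q (f n)) atTop (𝓝 0)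

/-- A measure space is separable if some sequence of measurable sets
approximates every measurable set of finite measure in measure. -/
def MeasSeparable (μ : MeasureTheory.Measure α) : Prop :=
  ∃ A : ℕ → Set α, (∀ n, MeasurableSet (A n)) ∧
    ∀ E : Set α, MeasurableSet E → μ E < ⊤ → ∀ ε : ENNReal, 0 < ε →
      ∃ n, μ (symmDiff (A n) E) < ε

namespace QBFS

lemma _root_.Measurable.cabs {f : α → ℂ} (hf : Measurable f) :
    Measurable (fun ω => ‖f ω‖) := by
  have h1 : Measurable (fun z : ℂ => ‖z‖) := measurable_norm
  have := h1.comp hf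
  exact this

lemma mem_zero (X : QBFS α μ) : X.Mem 0 := by
  obtain ⟨w, hw, -⟩ := X.exists_weak_unit
  simpa using X.smul_mem 0 w hw

lemma qnorm_zero (X : QBFS α μ) : X.qnorm 0 = 0 := by
  simpa using X.qnorm_smul 0 0

lemma mem_neg (X : QBFS α μ) {f} (hf : X.Mem f) : X.Mem (-f) := by
  simpa using X.smul_mem (-1) f hf

lemma mem_sub (X : QBFS α μ) {f g} (hf : X.Mem f) (hg : X.Mem g) : X.Mem (f - g) := by
  rw [sub_eq_add_neg]; exact X.add_mem _ _ hf (X.mem_neg hg)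

lemma qnorm_neg (X : QBFS α μ) (f) : X.qnorm (-f) = X.qnorm f := by
  simpa using X.qnorm_smul (-1) f

lemma qnorm_sub_comm (X : QBFS α μ) (f g) : X.qnorm (f - g) = X.qnorm (g - f) := by
  rw [← X.qnorm_neg, neg_sub]

lemma qnorm_sub_le (X : QBFS α μ) (f g h) (hf : X.Mem f) (hg : X.Mem g) (hh : X.Mem h) :
    X.qnorm (f - h) ≤ X.Cq * (X.qnorm (f - g) + X.qnorm (g - h)) := by
  have e : f - h = (f - g) + (g - h) := by abel
  rw [e]
  exact X.qnorm_add_le _ _ (X.mem_sub hf hg) (X.mem_sub hg hh)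

lemma mem_sum (X : QBFS α μ) {k : ℕ} (v : Fin k → α → ℂ) (hv : ∀ i, X.Mem (v i)) :
    X.Mem (∑ i, v i) := by
  induction k with
  | zero => simpa using X.mem_zero
  | succ k ih =>
      rw [Fin.sum_univ_succ]
      exact X.add_mem _ _ (hv 0) (ih _ (fun i => hv _))

lemma one_le_Cq_pow (X : QBFS α μ) (k : ℕ) : 1 ≤ X.Cq ^ k :=
  one_le_pow₀ X.one_le_Cq

lemma Cq_pos (X : QBFS α μ) : 0 < X.Cq := lt_of_lt_of_le one_pos X.one_le_Cq

lemma qnorm_sum_le (X : QBFS α μ) {k : ℕ} (v : Fin k → α → ℂ) (hv : ∀ i, X.Mem (v i)) :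
    X.qnorm (∑ i, v i) ≤ X.Cq ^ k * ∑ i, X.qnorm (v i) := by
  induction k with
  | zero => simp [X.qnorm_zero]
  | succ k ih =>
      rw [Fin.sum_univ_succ, Fin.sum_univ_succ (f := fun i => X.qnorm (v i))]
      have h1 : X.qnorm (v 0 + ∑ i : Fin k, v i.succ) ≤
          X.Cq * (X.qnorm (v 0) + X.qnorm (∑ i : Fin k, v i.succ)) :=
        X.qnorm_add_le _ _ (hv 0) (X.mem_sum _ (fun i => hv _))
      have h2 : X.qnorm (∑ i : Fin k, v i.succ) ≤ X.Cq ^ k * ∑ i : Fin k, X.qnorm (v i.succ) :=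
        ih (fun i => v i.succ) (fun i => hv _)
      have ha : 0 ≤ X.qnorm (v 0) := X.qnorm_nonneg _
      have hb : 0 ≤ ∑ i : Fin k, X.qnorm (v i.succ) :=
        Finset.sum_nonneg fun i _ => X.qnorm_nonneg _
      have hC : 1 ≤ X.Cq := X.one_le_Cq
      have hCk : 1 ≤ X.Cq ^ k := X.one_le_Cq_pow k
      have hCpos : (0:ℝ) < X.Cq := X.Cq_pos
      calc X.qnorm (v 0 + ∑ i : Fin k, v i.succ)
          ≤ X.Cq * (X.qnorm (v 0) + X.qnorm (∑ i : Fin k, v i.succ)) := h1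
        _ ≤ X.Cq * (X.qnorm (v 0) + X.Cq ^ k * ∑ i : Fin k, X.qnorm (v i.succ)) := by
            have := add_le_add_right h2 (X.qnorm (v 0))
            exact mul_le_mul_of_nonneg_left this (le_of_lt hCpos)
        _ ≤ X.Cq ^ (k+1) * (X.qnorm (v 0) + ∑ i : Fin k, X.qnorm (v i.succ)) := by
            rw [pow_succ]
            nlinarith [mul_nonneg (mul_nonneg (le_of_lt hCpos) ha) (sub_nonneg.mpr hCk)]

lemma mem_indicator (X : QBFS α μ) {f : α → ℂ} (hf : X.Mem f) {S : Set α}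
    (hS : MeasurableSet S) : X.Mem (S.indicator f) := by
  apply X.lattice_mem f _ hf ((X.mem_aemeasurable f hf).indicator hS)
  refine Eventually.of_forall fun ω => ?_
  by_cases h : ω ∈ S <;> simp [Set.indicator_apply, h]

/-- If the quasi-norms of a sequence tend to zero and the sequence tends a.e.
pointwise to `g`, then `g = 0` a.e. -/
lemma ae_zero_of_tendsto (X : QBFS α μ) [MeasureTheory.SigmaFinite μ]
    {z : ℕ → α → ℂ} {g : α → ℂ}
    (hz : ∀ n, X.Mem (z n)) (hg : AEMeasurable g μ)
    (hq : Tendsto (fun n => X.qnorm (z n)) atTop (𝓝 0))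
    (hae : ∀ᵐ ω ∂μ, Tendsto (fun n => z n ω) atTop (𝓝 (g ω))) :
    g =ᵐ[μ] 0 := by
  by_contra hne
  set g' := hg.mk g with hg'def
  have hgg' : g =ᵐ[μ] g' := hg.ae_eq_mk
  have hg'meas : Measurable g' := hg.measurable_mk
  have hz' : ∀ n, AEMeasurable (z n) μ := fun n => X.mem_aemeasurable _ (hz n)
  have hzz' : ∀ᵐ ω ∂μ, ∀ n, z n ω = (hz' n).mk (z n) ω := by
    rw [MeasureTheory.ae_all_iff]; exact fun n => (hz' n).ae_eq_mk
  have hne' : ¬ g' =ᵐ[μ] 0 := fun h => hne (hgg'.trans h)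
  -- a positive-measure set where |g'| is bounded below
  have hpos : ∃ m : ℕ, μ {ω | 1 / ((m:ℝ) + 1) < ‖g' ω‖} ≠ 0 := by
    by_contra hall
    push_neg at hall
    apply hne'
    have hsub : {ω | g' ω ≠ 0} ⊆ ⋃ m : ℕ, {ω | 1 / ((m:ℝ) + 1) < ‖g' ω‖} := by
      intro ω hω
      have : 0 < ‖g' ω‖ := by
        simpa [norm_pos_iff] using hω
      obtain ⟨m, hm⟩ := exists_nat_one_div_lt this
      exact Set.mem_iUnion.2 ⟨m, hm⟩
    have h0 : μ {ω | g' ω ≠ 0} = 0 := by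
      refine le_antisymm (le_trans (MeasureTheory.measure_mono hsub) ?_) (zero_le)
      refine le_trans (MeasureTheory.measure_iUnion_le _) ?_
      have h0' : ∀ i : ℕ, μ {ω | 1 / ((i:ℝ) + 1) < ‖g' ω‖} = 0 := hall
      simp only [one_div] at h0'
      simp [h0']
    rw [Filter.eventuallyEq_iff_exists_mem]
    exact ⟨{ω | g' ω = 0}, by rwa [MeasureTheory.mem_ae_iff, show {ω | g' ω = 0}ᶜ = {ω | g' ω ≠ 0} from rfl], fun ω h => h⟩
  obtain ⟨m, hm⟩ := hpos
  set a : ℝ := 1 / ((m:ℝ) + 1) with hadef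
  have ha : 0 < a := by positivity
  set A : Set α := {ω | a < ‖g' ω‖} with hAdef
  have hAmeas : MeasurableSet A := measurableSet_lt measurable_const hg'meas.cabs
  -- intersect with a spanning set
  have hA0 : ∃ n : ℕ, μ (A ∩ MeasureTheory.spanningSets μ n) ≠ 0 := by
    by_contra hall
    push_neg at hall
    apply hm
    have : A ⊆ ⋃ n, A ∩ MeasureTheory.spanningSets μ n := by
      intro ω hω
      have : ω ∈ ⋃ n, MeasureTheory.spanningSets μ n := by
        rw [MeasureTheory.iUnion_spanningSets]; trivial
      obtain ⟨_, ⟨n, rfl⟩, hn⟩ := this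
      exact Set.mem_iUnion.2 ⟨n, hω, hn⟩
    refine le_antisymm (le_trans (MeasureTheory.measure_mono this) ?_) (zero_le)
    refine le_trans (MeasureTheory.measure_iUnion_le _) ?_
    simp [hall]
  obtain ⟨n₀, hS0⟩ := hA0
  set S : Set α := A ∩ MeasureTheory.spanningSets μ n₀ with hSdef
  have hSmeas : MeasurableSet S :=
    hAmeas.inter (MeasureTheory.measurableSet_spanningSets μ n₀)
  -- sets where the tail is uniformly bounded below
  set Q : ℕ → Set α := fun I =>
    S ∩ ⋂ (i : ℕ), ⋂ (_ : I ≤ i), {ω | a / 2 ≤ ‖(hz' i).mk (z i) ω‖} with hQdef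
  have hQmeas : ∀ I, MeasurableSet (Q I) := by
    intro I
    refine hSmeas.inter (MeasurableSet.iInter fun i => MeasurableSet.iInter fun _ => ?_)
    exact measurableSet_le measurable_const (hz' i).measurable_mk.cabs
  have hcover : ∀ᵐ ω ∂μ, ω ∈ S → ω ∈ ⋃ I, Q I := by
    filter_upwards [hae, hzz', hgg'] with ω hten hzk hgk hωS
    have hga : a < ‖g ω‖ := by
      rw [hgk]; exact hωS.1
    rw [Metric.tendsto_atTop] at hten
    obtain ⟨N, hN⟩ := hten (a / 2) (by positivity)
    refine Set.mem_iUnion.2 ⟨N, hωS, ?_⟩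
    refine Set.mem_iInter.2 fun i => Set.mem_iInter.2 fun hi => ?_
    have hd := hN i hi
    rw [dist_comm, Complex.dist_eq] at hd
    have hsub2 : ‖g ω‖ - ‖z i ω‖ ≤ ‖g ω - z i ω‖ := by
      simpa using norm_sub_norm_le (g ω) (z i ω)
    have hzib : a / 2 ≤ ‖z i ω‖ := by nlinarith
    simp only [Set.mem_setOf_eq]
    rw [← hzk i] ; exact hzib
  have hQpos : ∃ I, μ (Q I) ≠ 0 := by
    by_contra hall
    push_neg at hall
    apply hS0
    have hnull : μ (S \ ⋃ I, Q I) = 0 := by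
      have : ∀ᵐ ω ∂μ, ω ∉ S \ ⋃ I, Q I := by
        filter_upwards [hcover] with ω h hmem
        exact hmem.2 (h hmem.1)
      exact MeasureTheory.measure_eq_zero_iff_ae_notMem.2 this
    have : μ S ≤ μ (S \ ⋃ I, Q I) + μ (⋃ I, Q I) := by
      refine le_trans (MeasureTheory.measure_mono ?_) (MeasureTheory.measure_union_le _ _)
      intro ω hω
      by_cases h : ω ∈ ⋃ I, Q I
      · exact Or.inr h
      · exact Or.inl ⟨hω, h⟩
    have hU : μ (⋃ I, Q I) = 0 := by
      refine le_antisymm (le_trans (MeasureTheory.measure_iUnion_le _) ?_) (zero_le)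
      simp [hall]
    rw [hnull, hU] at this
    simpa using le_antisymm (by simpa using this) (zero_le)
  obtain ⟨I, hQI⟩ := hQpos
  set v : α → ℂ := ((a/2 : ℝ) : ℂ) • (Q I).indicator (fun _ => (1:ℂ)) with hvdef
  have hvdom : ∀ i, I ≤ i → ∀ᵐ ω ∂μ, ‖v ω‖ ≤ ‖z i ω‖ := by
    intro i hi
    filter_upwards [hzz'] with ω hzk
    by_cases h : ω ∈ Q I
    · have h1 : ‖v ω‖ = a / 2 := by
        simp [hvdef, Set.indicator_of_mem h, Complex.norm_real, Real.norm_eq_abs, _root_.abs_of_pos ha]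
      have h2 : a / 2 ≤ ‖(hz' i).mk (z i) ω‖ := by
        have := h.2
        rw [Set.mem_iInter] at this
        have := this i
        rw [Set.mem_iInter] at this
        exact this hi
      rw [h1, hzk i]; exact h2
    · have : v ω = 0 := by simp [hvdef, Set.indicator_of_notMem h]
      rw [this]; simp
  have hvmeas : AEMeasurable v μ := by
    refine AEMeasurable.const_smul ?_ _
    exact (measurable_const.indicator (hQmeas I)).aemeasurable
  have hvmem : X.Mem v := X.lattice_mem (z I) v (hz I) hvmeas (hvdom I le_rfl)
  have hvq : X.qnorm v = 0 := by
    refine le_antisymm ?_ (X.qnorm_nonneg v)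
    refine ge_of_tendsto hq (Filter.eventually_atTop.2 ⟨I, fun i hi => ?_⟩)
    exact X.lattice_qnorm (z i) v (hz i) (hvdom i hi)
  have hv0 : v =ᵐ[μ] 0 := (X.qnorm_eq_zero_iff v hvmem).mp hvq
  apply hQI
  refine MeasureTheory.measure_eq_zero_iff_ae_notMem.2 ?_
  filter_upwards [hv0] with ω h0 hmem
  have hv : v ω = ((a/2 : ℝ) : ℂ) := by simp [hvdef, Set.indicator_of_mem hmem]
  rw [hv] at h0
  simp only [Pi.zero_apply, Complex.ofReal_eq_zero] at h0
  have : (0:ℝ) < a / 2 := by positivity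
  linarith [this, h0.le]

end QBFS

lemma abs_eq_re_of_nonneg {z : ℂ} (h1 : z.im = 0) (h2 : 0 ≤ z.re) :
    ‖z‖ = z.re := by
  have hz : z = ((z.re : ℝ) : ℂ) := Complex.ext rfl (by simp [h1])
  rw [hz, Complex.norm_real, Real.norm_eq_abs, _root_.abs_of_nonneg h2, Complex.ofReal_re]

lemma eq_re_of_im_zero {z : ℂ} (h1 : z.im = 0) : z = ((z.re : ℝ) : ℂ) :=
  Complex.ext rfl (by simp [h1])

lemma orderCont_of_separable [MeasureTheory.SigmaFinite μ] (X : QBFS α μ)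
    (hSep : SeparableFS (α := α) X.Mem X.qnorm) : OrderContFS μ X.Mem X.qnorm := by
  classical
  intro f hMem hae
  by_contra hno
  -- quasi-norms are antitone and bounded below; let L be the (positive) limit
  have hdom : ∀ n, ∀ᵐ ω ∂μ, ‖f (n+1) ω‖ ≤ ‖f n ω‖ := by
    intro n
    filter_upwards [hae] with ω h
    have h1 := h.1 n
    have h2 := h.1 (n+1)
    rw [abs_eq_re_of_nonneg h1.1 h1.2.1, abs_eq_re_of_nonneg h2.1 h2.2.1]
    exact h1.2.2
  have hanti : Antitone (fun n => X.qnorm (f n)) :=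
    antitone_nat_of_succ_le fun n => X.lattice_qnorm _ _ (hMem n) (hdom n)
  have hbdd : BddBelow (Set.range fun n => X.qnorm (f n)) :=
    ⟨0, by rintro x ⟨n, rfl⟩; exact X.qnorm_nonneg _⟩
  have hlim := tendsto_atTop_ciInf hanti hbdd
  set L := ⨅ n, X.qnorm (f n) with hLdef
  have hLle : ∀ n, L ≤ X.qnorm (f n) := fun n => ciInf_le hbdd n
  have hL0 : 0 ≤ L := le_ciInf fun n => X.qnorm_nonneg _
  have hLpos : 0 < L := by
    rcases lt_or_eq_of_le hL0 with h | h
    · exact h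
    · exact absurd (h ▸ hlim) hno
  set qh := X.qnorm (f 0) with hqhdef
  have hqhpos : 0 < qh := lt_of_lt_of_le hLpos (hLle 0)
  set δ := L / (2 * X.Cq * qh) with hδdef
  have hδpos : 0 < δ := by
    apply div_pos hLpos
    have := X.Cq_pos
    nlinarith
  -- measurable representatives
  set fm : ℕ → α → ℂ := fun n => (X.mem_aemeasurable _ (hMem n)).mk (f n) with hfmdef
  have hfmeq : ∀ᵐ ω ∂μ, ∀ n, f n ω = fm n ω := by
    rw [MeasureTheory.ae_all_iff]
    exact fun n => (X.mem_aemeasurable _ (hMem n)).ae_eq_mk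
  have hfmmeas : ∀ n, Measurable (fm n) := fun n => (X.mem_aemeasurable _ (hMem n)).measurable_mk
  -- the sets where f n is still large
  set B : ℕ → Set α := fun n => {ω | δ * (fm 0 ω).re < (fm n ω).re} with hBdef
  have hBmeas : ∀ n, MeasurableSet (B n) :=
    fun n => measurableSet_lt (measurable_const.mul (Complex.measurable_re.comp (hfmmeas 0)))
      (Complex.measurable_re.comp (hfmmeas n))
  set E : ℕ → Set α := fun n => ⋂ (k : ℕ), ⋂ (_ : k ≤ n), B k with hEdef
  have hEmeas : ∀ n, MeasurableSet (E n) :=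
    fun n => MeasurableSet.iInter fun k => MeasurableSet.iInter fun _ => hBmeas k
  have hEanti : Antitone E := by
    intro n m hnm ω hω
    refine Set.mem_iInter.2 fun k => Set.mem_iInter.2 fun hk => ?_
    have := Set.mem_iInter.1 hω k
    exact Set.mem_iInter.1 this (le_trans hk hnm)
  have hEB : ∀ n, E n ⊆ B n := by
    intro n ω hω
    exact Set.mem_iInter.1 (Set.mem_iInter.1 hω n) le_rfl
  -- pointwise antitonicity of the real parts
  have haepoint : ∀ᵐ ω ∂μ, (∀ n, (f n ω).im = 0 ∧ 0 ≤ (f n ω).re ∧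
      (f (n + 1) ω).re ≤ (f n ω).re) ∧ Tendsto (fun n => (f n ω).re) atTop (𝓝 0) ∧
      (∀ n, f n ω = fm n ω) := by
    filter_upwards [hae, hfmeq] with ω h1 h2
    exact ⟨h1.1, h1.2, h2⟩
  -- the key norm lower bound on indicators over E n
  set ε₁ := L / (2 * X.Cq) with hε₁def
  have hε₁pos : 0 < ε₁ := by
    apply div_pos hLpos
    have := X.Cq_pos
    nlinarith
  have hqE : ∀ n, ε₁ ≤ X.qnorm ((E n).indicator (f 0)) := by
    intro n
    set φ : α → ℂ := ((δ : ℝ) : ℂ) • f 0 + (E n).indicator (f 0) with hφdef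
    have hφmem : X.Mem φ :=
      X.add_mem _ _ (X.smul_mem _ _ (hMem 0)) (X.mem_indicator (hMem 0) (hEmeas n))
    have hptdom : ∀ᵐ ω ∂μ, ‖f n ω‖ ≤ ‖φ ω‖ := by
      filter_upwards [haepoint] with ω h
      obtain ⟨hprops, hten, hfm⟩ := h
      have hre_anti : Antitone (fun j => (f j ω).re) :=
        antitone_nat_of_succ_le fun j => (hprops j).2.2
      set r0 := (f 0 ω).re with hr0def
      have hr0 : 0 ≤ r0 := (hprops 0).2.1
      have hf0 : f 0 ω = ((r0 : ℝ) : ℂ) := eq_re_of_im_zero (hprops 0).1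
      have hφω : φ ω = (((δ * r0 + (if ω ∈ E n then r0 else 0)) : ℝ) : ℂ) := by
        simp only [hφdef, Pi.add_apply, Pi.smul_apply, smul_eq_mul, Set.indicator_apply]
        by_cases hmem : ω ∈ E n <;> simp [hmem, hf0] <;> push_cast <;> ring
      have habsφ : ‖φ ω‖ = δ * r0 + (if ω ∈ E n then r0 else 0) := by
        rw [hφω, Complex.norm_real, Real.norm_eq_abs, _root_.abs_of_nonneg]
        have : (0:ℝ) ≤ (if ω ∈ E n then r0 else 0) := by positivity
        positivity
      rw [abs_eq_re_of_nonneg (hprops n).1 (hprops n).2.1, habsφ]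
      by_cases hmem : ω ∈ E n
      · simp only [hmem, if_true]
        have : (f n ω).re ≤ r0 := hre_anti (Nat.zero_le n)
        nlinarith
      · simp only [hmem, if_false, add_zero]
        -- there is k ≤ n with ω ∉ B k
        have : ∃ k, k ≤ n ∧ ω ∉ B k := by
          by_contra hcon
          push_neg at hcon
          exact hmem (Set.mem_iInter.2 fun k => Set.mem_iInter.2 fun hk => hcon k hk)
        obtain ⟨k, hkn, hknB⟩ := this
        have hkB : (fm k ω).re ≤ δ * (fm 0 ω).re := not_lt.1 hknB
        rw [← hfm k, ← hfm 0] at hkB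
        have : (f n ω).re ≤ (f k ω).re := hre_anti hkn
        calc (f n ω).re ≤ (f k ω).re := this
          _ ≤ δ * (f 0 ω).re := hkB
          _ = δ * r0 := rfl
    have h1 : L ≤ X.qnorm φ :=
      le_trans (hLle n) (X.lattice_qnorm _ _ hφmem hptdom)
    have h2 : X.qnorm φ ≤ X.Cq * (δ * qh + X.qnorm ((E n).indicator (f 0))) := by
      have := X.qnorm_add_le _ _ (X.smul_mem ((δ:ℝ):ℂ) _ (hMem 0))
        (X.mem_indicator (hMem 0) (hEmeas n))
      have hsm : X.qnorm (((δ:ℝ):ℂ) • f 0) = δ * qh := by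
        rw [X.qnorm_smul, Complex.norm_real, Real.norm_eq_abs, _root_.abs_of_pos hδpos]
      rw [hsm] at this
      exact this
    have hCpos : (0:ℝ) < X.Cq := X.Cq_pos
    have : L ≤ X.Cq * (δ * qh + X.qnorm ((E n).indicator (f 0))) := le_trans h1 h2
    have hδqh : X.Cq * (δ * qh) = L / 2 := by
      rw [hδdef]; field_simp
    rw [hε₁def]
    have hq0 : 0 ≤ X.qnorm ((E n).indicator (f 0)) := X.qnorm_nonneg _
    rw [div_le_iff₀ (by positivity)]
    nlinarith
  -- on the intersection of all E n, f 0 vanishes a.e.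
  have htail_null : ∀ᵐ ω ∂μ, ω ∈ (⋂ m, E m) → f 0 ω = 0 := by
    filter_upwards [haepoint] with ω h hmem
    obtain ⟨hprops, hten, hfm⟩ := h
    have hall : ∀ m, δ * (f 0 ω).re < (f m ω).re := by
      intro m
      have := hEB m (Set.mem_iInter.1 hmem m)
      rw [hBdef] at this
      simp only [Set.mem_setOf_eq] at this
      rwa [← hfm 0, ← hfm m] at this
    have hle : δ * (f 0 ω).re ≤ 0 :=
      ge_of_tendsto' hten fun m => le_of_lt (hall m)
    have hre0 : (f 0 ω).re = 0 := by
      have := (hprops 0).2.1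
      nlinarith
    rw [eq_re_of_im_zero (hprops 0).1, hre0]
    simp
  -- disjoint layers
  set F : ℕ → Set α := fun k => E k \ E (k+1) with hFdef
  have hFdisj : ∀ k l, k ≠ l → ∀ ω, ω ∈ F k → ω ∈ F l → False := by
    have key : ∀ k l, k < l → ∀ ω, ω ∈ F k → ω ∈ F l → False := by
      intro k l hkl ω hk hl
      exact hk.2 (hEanti (by omega : k + 1 ≤ l) hl.1)
    intro k l hkl ω hk hl
    rcases lt_or_gt_of_ne hkl with h | h
    · exact key k l h ω hk hl
    · exact key l k h ω hl hk
  set U : Set ℕ → Set α := fun A => ⋃ k ∈ A, F k with hUdef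
  have hUmeas : ∀ A, MeasurableSet (U A) := by
    intro A
    refine MeasurableSet.biUnion (Set.to_countable A) fun k _ => ((hEmeas k).diff (hEmeas (k+1)))
  set σf : Set ℕ → (α → ℂ) := fun A => (U A).indicator (f 0) with hσdef
  have hσmem : ∀ A, X.Mem (σf A) := fun A => X.mem_indicator (hMem 0) (hUmeas A)
  have hUmem_iff : ∀ (A : Set ℕ) (k : ℕ) (ω : α), ω ∈ F k → (ω ∈ U A ↔ k ∈ A) := by
    intro A k ω hωF
    constructor
    · intro hωU
      obtain ⟨k', hk'A, hk'F⟩ := by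
        simpa only [hUdef, Set.mem_iUnion, exists_prop] using hωU
      rcases eq_or_ne k' k with rfl | hne
      · exact hk'A
      · exact absurd (hFdisj k' k hne ω hk'F hωF) not_false
    · intro hkA
      exact Set.mem_biUnion hkA hωF
  -- tail identity
  have hUtail : ∀ n, U {k | n ≤ k} = E n \ ⋂ m, E m := by
    intro n
    ext ω
    constructor
    · intro hω
      obtain ⟨k, hk, hF⟩ := by
        simpa only [hUdef, Set.mem_iUnion, exists_prop] using hω
      refine ⟨hEanti hk hF.1, fun hI => hF.2 (Set.mem_iInter.1 hI (k+1))⟩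
    · rintro ⟨hEn, hI⟩
      have hex : ∃ m, ω ∉ E m := by
        by_contra hcon
        push_neg at hcon
        exact hI (Set.mem_iInter.2 hcon)
      have hm : ω ∉ E (Nat.find hex) := Nat.find_spec hex
      have hnm : n < Nat.find hex := by
        by_contra hcon
        push_neg at hcon
        exact hm (hEanti hcon hEn)
      have hm' : ω ∈ E (Nat.find hex - 1) := by
        by_contra hcon
        exact (Nat.find_min hex (show Nat.find hex - 1 < Nat.find hex by omega)) hcon
      have hωF : ω ∈ F (Nat.find hex - 1) := by
        simp only [hFdef]
        refine ⟨hm', ?_⟩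
        have heq : Nat.find hex - 1 + 1 = Nat.find hex := by omega
        rw [heq]
        exact hm
      exact Set.mem_biUnion (show n ≤ Nat.find hex - 1 by omega) hωF
  have htail_eq : ∀ n, σf {k | n ≤ k} =ᵐ[μ] (E n).indicator (f 0) := by
    intro n
    filter_upwards [htail_null] with ω h0
    rw [hσdef]
    simp only [hUtail n]
    by_cases hI : ω ∈ ⋂ m, E m
    · have := h0 hI
      by_cases h1 : ω ∈ E n \ ⋂ m, E m <;> by_cases h2 : ω ∈ E n <;>
        simp [Set.indicator_apply, h1, h2, this]
    · by_cases h2 : ω ∈ E n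
      · have hmem : ω ∈ E n \ ⋂ m, E m := ⟨h2, hI⟩
        rw [Set.indicator_of_mem hmem, Set.indicator_of_mem h2]
      · rw [Set.indicator_of_notMem (fun hc => h2 hc.1), Set.indicator_of_notMem h2]
  have hσtail : ∀ n, ε₁ ≤ X.qnorm (σf {k | n ≤ k}) := by
    intro n
    rw [X.qnorm_congr _ _ (htail_eq n)]
    exact hqE n
  -- dichotomy on finite blocks
  by_cases hc : ∃ c > 0, ∀ m : ℕ, ∃ B : Finset ℕ, (∀ b ∈ B, m ≤ b) ∧ c ≤ X.qnorm (σf ↑B)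
  · -- Case 1 : an uncountable separated family, contradicting separability
    obtain ⟨c, hcpos, hblocks⟩ := hc
    choose Bf hBf1 hBf2 using hblocks
    set mf : ℕ → ℕ := fun i => i.rec 0 (fun _ prev => (Bf prev).sup id + 1) with hmfdef
    have hmfs : ∀ i, mf (i+1) = (Bf (mf i)).sup id + 1 := fun i => rfl
    set Bi : ℕ → Finset ℕ := fun i => Bf (mf i) with hBidef
    have hσempty : X.qnorm (σf (∅ : Set ℕ)) = 0 := by
      have h0 : σf (∅ : Set ℕ) = 0 := by
        rw [hσdef]
        funext ω
        simp [hUdef]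
      rw [h0, X.qnorm_zero]
    have hBine : ∀ i, (Bi i).Nonempty := by
      intro i
      rcases Finset.eq_empty_or_nonempty (Bi i) with h | h
      · exfalso
        have h2 := hBf2 (mf i)
        simp only [hBidef] at h
        rw [h, Finset.coe_empty, hσempty] at h2
        linarith
      · exact h
    have hBlt : ∀ i b, b ∈ Bi i → b < mf (i+1) := by
      intro i b hb
      rw [hmfs i]
      exact Nat.lt_succ_of_le (Finset.le_sup (f := id) hb)
    have hmflt : ∀ i, mf i < mf (i+1) := by
      intro i
      obtain ⟨b, hb⟩ := hBine i
      exact lt_of_le_of_lt (hBf1 (mf i) b hb) (hBlt i b hb)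
    have hmfmono : StrictMono mf := strictMono_nat_of_lt_succ hmflt
    have hBidisj : ∀ i j, i ≠ j → ∀ b, b ∈ Bi i → b ∈ Bi j → False := by
      have key : ∀ i j, i < j → ∀ b, b ∈ Bi i → b ∈ Bi j → False := by
        intro i j hij b hbi hbj
        have h1 : b < mf (i+1) := hBlt i b hbi
        have h2 : mf j ≤ b := hBf1 (mf j) b hbj
        have h3 : mf (i+1) ≤ mf j := hmfmono.monotone (Nat.succ_le_of_lt hij)
        omega
      intro i j hij b hbi hbj
      rcases lt_or_gt_of_ne hij with h | h
      · exact key i j h b hbi hbj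
      · exact key j i h b hbj hbi
    set W : Set ℕ → (α → ℂ) := fun S => σf (⋃ i ∈ S, (Bi i : Set ℕ)) with hWdef
    have hWmem : ∀ S, X.Mem (W S) := fun S => hσmem _
    have hWsep : ∀ S T : Set ℕ, ∀ i, i ∈ S → i ∉ T → c ≤ X.qnorm (W S - W T) := by
      intro S T i hiS hiT
      refine le_trans (hBf2 (mf i)) ?_
      refine X.lattice_qnorm _ _ (X.mem_sub (hWmem S) (hWmem T)) ?_
      refine Eventually.of_forall fun ω => ?_
      show ‖σf ↑(Bi i) ω‖ ≤ ‖(W S - W T) ω‖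
      by_cases hω : ω ∈ U ↑(Bi i)
      · obtain ⟨k, hk, hkF⟩ := by
          simpa only [hUdef, Set.mem_iUnion, exists_prop] using hω
        have hWS : W S ω = f 0 ω := by
          rw [hWdef]
          refine Set.indicator_of_mem ?_ _
          exact Set.mem_biUnion (Set.mem_biUnion hiS hk) hkF
        have hWT : W T ω = 0 := by
          rw [hWdef]
          refine Set.indicator_of_notMem ?_ _
          intro hmem
          have hkA := (hUmem_iff _ k ω hkF).1 hmem
          obtain ⟨j, hjT, hkj⟩ := by
            simpa only [Set.mem_iUnion, exists_prop] using hkA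
          exact hBidisj i j (fun hrfl => hiT (hrfl ▸ hjT)) k hk hkj
        have hval : σf ↑(Bi i) ω = f 0 ω := Set.indicator_of_mem hω _
        rw [Pi.sub_apply, hWS, hWT, sub_zero, hval]
      · have h0 : σf ↑(Bi i) ω = 0 := Set.indicator_of_notMem hω _
        rw [h0]
        simp
    obtain ⟨D, hDcount, hDmem, hDdense⟩ := hSep
    have hc2 : 0 < c / (2 * X.Cq) := by
      have := X.Cq_pos
      apply div_pos hcpos
      nlinarith
    have hch : ∀ S : Set ℕ, ∃ d ∈ D, X.qnorm (W S - d) < c / (2 * X.Cq) :=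
      fun S => hDdense (W S) (hWmem S) _ hc2
    choose dfun hdD hdq using hch
    obtain ⟨inj, hinj⟩ := Set.countable_iff_exists_injective.1 hDcount
    have hnotinj := Function.cantor_injective (fun S : Set ℕ => (inj ⟨dfun S, hdD S⟩ : ℕ))
    rw [Function.not_injective_iff] at hnotinj
    obtain ⟨S, T, hST, hSTne⟩ := hnotinj
    have hd_eq : dfun S = dfun T := congrArg Subtype.val (hinj hST)
    have hex : ∃ i, (i ∈ S ∧ i ∉ T) ∨ (i ∈ T ∧ i ∉ S) := by
      by_contra hcon
      push_neg at hcon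
      apply hSTne
      ext i
      have := hcon i
      tauto
    obtain ⟨i, hi⟩ := hex
    have hfar : c ≤ X.qnorm (W S - W T) := by
      rcases hi with ⟨h1, h2⟩ | ⟨h1, h2⟩
      · exact hWsep S T i h1 h2
      · rw [X.qnorm_sub_comm]
        exact hWsep T S i h1 h2
    have hclose : X.qnorm (W S - W T) ≤
        X.Cq * (X.qnorm (W S - dfun S) + X.qnorm (dfun S - W T)) :=
      X.qnorm_sub_le _ _ _ (hWmem S) (hDmem _ (hdD S)) (hWmem T)
    have h1 := hdq S
    have h2 : X.qnorm (dfun S - W T) < c / (2 * X.Cq) := by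
      rw [X.qnorm_sub_comm, hd_eq]
      exact hdq T
    have hCpos := X.Cq_pos
    have hmul : X.Cq * (X.qnorm (W S - dfun S) + X.qnorm (dfun S - W T)) < c := by
      have hadd := add_lt_add h1 h2
      have := mul_lt_mul_of_pos_left hadd hCpos
      have heq : X.Cq * (c / (2 * X.Cq) + c / (2 * X.Cq)) = c := by
        field_simp
        ring
      linarith
    linarith
  · -- Case 2 : build a Cauchy sequence whose limit contradicts the tail bound
    push_neg at hc
    have ht0ex : ∀ j : ℕ, ∃ m, ∀ B : Finset ℕ, (∀ b ∈ B, m ≤ b) →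
        X.qnorm (σf ↑B) < 1/((j:ℝ)+1) :=
      fun j => hc (1/((j:ℝ)+1)) (by positivity)
    choose t0 ht0 using ht0ex
    set t : ℕ → ℕ := fun j => j + (Finset.range (j+1)).sup t0 with htdef
    have htmono : Monotone t := by
      intro a b hab
      have h := Finset.sup_mono (Finset.range_subset_range.2 (by omega : a + 1 ≤ b + 1)) (f := t0)
      simp only [htdef]
      omega
    have htge : ∀ j, t0 j ≤ t j := by
      intro j
      have h : t0 j ≤ (Finset.range (j+1)).sup t0 :=
        Finset.le_sup (Finset.self_mem_range_succ j)
      simp only [htdef]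
      omega
    have htj : ∀ j, j ≤ t j := fun j => by simp only [htdef]; omega
    have hkey : ∀ j (B : Finset ℕ), (∀ b ∈ B, t j ≤ b) → X.qnorm (σf ↑B) < 1/((j:ℝ)+1) :=
      fun j B hB => ht0 j B (fun b hb => le_trans (htge j) (hB b hb))
    set u : ℕ → α → ℂ := fun j => σf ↑(Finset.Ico (t 0) (t j)) with hudef
    have humem : ∀ j, X.Mem (u j) := fun j => hσmem _
    have hUdisj2 : ∀ A A' : Set ℕ, (∀ k, k ∈ A → k ∈ A' → False) → Disjoint (U A) (U A') := by
      intro A A' hAA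
      rw [Set.disjoint_left]
      intro ω hωA hωA'
      obtain ⟨k, hk, hkF⟩ := by simpa only [hUdef, Set.mem_iUnion, exists_prop] using hωA
      exact hAA k hk ((hUmem_iff A' k ω hkF).1 hωA')
    have hσadd : ∀ A A' : Set ℕ, (∀ k, k ∈ A → k ∈ A' → False) →
        σf (A ∪ A') = σf A + σf A' := by
      intro A A' hAA
      have hdisj := hUdisj2 A A' hAA
      have hU2 : U (A ∪ A') = U A ∪ U A' := Set.biUnion_union A A' F
      funext ω
      show (U (A ∪ A')).indicator (f 0) ω =
        (U A).indicator (f 0) ω + (U A').indicator (f 0) ω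
      rw [hU2, Set.indicator_union_of_disjoint hdisj (f 0)]
    have hudiff : ∀ j j', j ≤ j' → u j' - u j = σf ↑(Finset.Ico (t j) (t j')) := by
      intro j j' hjj
      have hset : (↑(Finset.Ico (t 0) (t j')) : Set ℕ) =
          ↑(Finset.Ico (t 0) (t j)) ∪ ↑(Finset.Ico (t j) (t j')) := by
        simp only [Finset.coe_Ico]
        ext k
        simp only [Set.mem_Ico, Set.mem_union]
        have h1 := htmono (Nat.zero_le j)
        have h2 := htmono hjj
        omega
      have hdisj : ∀ k, k ∈ (↑(Finset.Ico (t 0) (t j)) : Set ℕ) →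
          k ∈ (↑(Finset.Ico (t j) (t j')) : Set ℕ) → False := by
        intro k h1 h2
        simp only [Finset.coe_Ico, Set.mem_Ico] at h1 h2
        omega
      rw [hudef]
      simp only [hset, hσadd _ _ hdisj]
      abel
    have hcauchy : ∀ ε : ℝ, 0 < ε → ∃ N, ∀ m ≥ N, ∀ n ≥ N, X.qnorm (u m - u n) ≤ ε := by
      intro ε hε
      obtain ⟨N, hN⟩ := exists_nat_one_div_lt hε
      refine ⟨N, fun m hm n hn => ?_⟩
      have key : ∀ a b, N ≤ a → a ≤ b → X.qnorm (u b - u a) ≤ ε := by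
        intro a b hNa hab
        rw [hudiff a b hab]
        have h1 := hkey a (Finset.Ico (t a) (t b)) (fun x hx => (Finset.mem_Ico.1 hx).1)
        have hmono2 : 1/((a:ℝ)+1) ≤ 1/((N:ℝ)+1) := by
          apply one_div_le_one_div_of_le
          · positivity
          · have : (N:ℝ) ≤ (a:ℝ) := by exact_mod_cast hNa
            linarith
        linarith
      rcases le_total n m with h | h
      · exact key n m hn h
      · rw [X.qnorm_sub_comm]
        exact key m n hm h
    obtain ⟨g, hgmem, hgten⟩ := X.complete u humem hcauchy
    set uinf : α → ℂ := σf {k | t 0 ≤ k} with huinfdef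
    have huinfmem : X.Mem uinf := hσmem _
    have hpt : ∀ ω, Tendsto (fun j => u j ω) atTop (𝓝 (uinf ω)) := by
      intro ω
      by_cases hω : ω ∈ U {k | t 0 ≤ k}
      · obtain ⟨k, hk, hkF⟩ := by simpa only [hUdef, Set.mem_iUnion, exists_prop] using hω
        have hconst : ∀ j, k + 1 ≤ j → u j ω = uinf ω := by
          intro j hj
          have hkj : k < t j := lt_of_lt_of_le (Nat.lt_succ_of_le (le_refl k))
            (le_trans hj (htj j))
          have hmemIco : k ∈ (↑(Finset.Ico (t 0) (t j)) : Set ℕ) := by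
            simp only [Finset.coe_Ico, Set.mem_Ico]
            exact ⟨hk, hkj⟩
          have h1 : u j ω = f 0 ω := by
            rw [hudef]
            exact Set.indicator_of_mem (Set.mem_biUnion hmemIco hkF) _
          have h2 : uinf ω = f 0 ω := by
            rw [huinfdef]
            exact Set.indicator_of_mem (Set.mem_biUnion hk hkF) _
          rw [h1, h2]
        exact tendsto_atTop_of_eventually_const hconst
      · have hconst : ∀ j, 0 ≤ j → u j ω = uinf ω := by
          intro j _
          have h1 : u j ω = 0 := by
            rw [hudef]
            refine Set.indicator_of_notMem (fun hmem => hω ?_) _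
            obtain ⟨k, hk, hkF⟩ := by
              simpa only [hUdef, Set.mem_iUnion, exists_prop] using hmem
            simp only [Finset.coe_Ico, Set.mem_Ico] at hk
            exact Set.mem_biUnion (show k ∈ {k : ℕ | t 0 ≤ k} from hk.1) hkF
          have h2 : uinf ω = 0 := by
            rw [huinfdef]
            exact Set.indicator_of_notMem hω _
          rw [h1, h2]
        exact tendsto_atTop_of_eventually_const hconst
    have hzlim : (uinf - g) =ᵐ[μ] 0 := by
      refine X.ae_zero_of_tendsto (z := fun j => u j - g) (g := uinf - g)
        (fun j => X.mem_sub (humem j) hgmem)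
        ((X.mem_aemeasurable _ huinfmem).sub (X.mem_aemeasurable _ hgmem)) hgten ?_
      refine Eventually.of_forall fun ω => ?_
      have := (hpt ω).sub_const (g ω)
      simpa using this
    have hug : uinf =ᵐ[μ] g := by
      filter_upwards [hzlim] with ω h
      have h2 : uinf ω - g ω = 0 := h
      exact sub_eq_zero.1 h2
    have hq2 : Tendsto (fun j => X.qnorm (u j - uinf)) atTop (𝓝 0) := by
      have heqq : ∀ j, X.qnorm (u j - uinf) = X.qnorm (u j - g) := by
        intro j
        apply X.qnorm_congr
        filter_upwards [hug] with ω h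
        simp only [Pi.sub_apply, h]
      simp only [heqq]
      exact hgten
    have hlb : ∀ j, ε₁ ≤ X.qnorm (u j - uinf) := by
      intro j
      rw [X.qnorm_sub_comm]
      have hdiff : uinf - u j = σf {k | t j ≤ k} := by
        have hset : {k : ℕ | t 0 ≤ k} =
            (↑(Finset.Ico (t 0) (t j)) : Set ℕ) ∪ {k : ℕ | t j ≤ k} := by
          ext k
          simp only [Finset.coe_Ico, Set.mem_Ico, Set.mem_union, Set.mem_setOf_eq]
          have := htmono (Nat.zero_le j)
          omega
        have hdisj : ∀ k, k ∈ (↑(Finset.Ico (t 0) (t j)) : Set ℕ) →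
            k ∈ {k : ℕ | t j ≤ k} → False := by
          intro k h1 h2
          simp only [Finset.coe_Ico, Set.mem_Ico] at h1
          simp only [Set.mem_setOf_eq] at h2
          omega
        rw [huinfdef, hudef]
        simp only [hset, hσadd _ _ hdisj]
        abel
      rw [hdiff]
      exact hσtail (t j)
    have hfin : ε₁ ≤ 0 := ge_of_tendsto hq2 (Eventually.of_forall hlb)
    linarith

set_option maxHeartbeats 2000000 in
lemma separable_of_orderCont [MeasureTheory.SigmaFinite μ] (hμ : MeasSeparable μ)
    (X : QBFS α μ) (hOC : OrderContFS μ X.Mem X.qnorm) :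
    SeparableFS (α := α) X.Mem X.qnorm := by
  classical
  obtain ⟨A, hAmeas, hAapprox⟩ := hμ
  obtain ⟨w, hwmem, hwpos⟩ := X.exists_weak_unit
  set w' := (X.mem_aemeasurable w hwmem).mk w with hw'def
  have hww' : w =ᵐ[μ] w' := (X.mem_aemeasurable w hwmem).ae_eq_mk
  have hw'meas : Measurable w' := (X.mem_aemeasurable w hwmem).measurable_mk
  set G : ℕ → Set α := fun m =>
    MeasureTheory.spanningSets μ m ∩ {ω | 1/((m:ℝ)+1) ≤ ‖w' ω‖} with hGdef
  have hGmeas : ∀ m, MeasurableSet (G m) := fun m =>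
    (MeasureTheory.measurableSet_spanningSets μ m).inter
      (measurableSet_le measurable_const hw'meas.cabs)
  have hGmono : Monotone G := by
    intro m m' hmm ω hω
    refine ⟨MeasureTheory.monotone_spanningSets μ hmm hω.1, ?_⟩
    have h1 : 1/((m':ℝ)+1) ≤ 1/((m:ℝ)+1) := by
      apply one_div_le_one_div_of_le
      · positivity
      · have : (m:ℝ) ≤ (m':ℝ) := by exact_mod_cast hmm
        linarith
    exact le_trans h1 hω.2
  have hGfin : ∀ m, μ (G m) < ⊤ := fun m =>
    lt_of_le_of_lt (MeasureTheory.measure_mono Set.inter_subset_left)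
      (MeasureTheory.measure_spanningSets_lt_top μ m)
  have hGcov : ∀ᵐ ω ∂μ, ∃ m, ω ∈ G m := by
    filter_upwards [hwpos, hww'] with ω h1 h2
    have h3 : 0 < ‖w' ω‖ := by rw [← h2]; exact h1
    obtain ⟨m2, hm2⟩ := exists_nat_one_div_lt h3
    have h4 : ω ∈ ⋃ i, MeasureTheory.spanningSets μ i := by
      rw [MeasureTheory.iUnion_spanningSets]; trivial
    obtain ⟨_, ⟨m1, rfl⟩, hm1⟩ := h4
    refine ⟨max m1 m2, MeasureTheory.monotone_spanningSets μ (le_max_left _ _) hm1, ?_⟩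
    have h5 : 1/((max m1 m2 : ℕ):ℝ) ≤ 1/((m2:ℝ)) → True := fun _ => trivial
    have h6 : 1/(((max m1 m2 : ℕ):ℝ)+1) ≤ 1/((m2:ℝ)+1) := by
      apply one_div_le_one_div_of_le
      · positivity
      · have : (m2:ℝ) ≤ ((max m1 m2 : ℕ):ℝ) := by exact_mod_cast le_max_right m1 m2
        linarith
    exact le_trans h6 (le_of_lt hm2)
  -- indicators of subsets of G m belong to X
  have hχmem : ∀ (S : Set α) (m : ℕ), MeasurableSet S → S ⊆ G m →
      X.Mem (S.indicator (fun _ => (1:ℂ))) := by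
    intro S m hSmeas hSsub
    refine X.lattice_mem ((((m:ℝ)+1 : ℝ) : ℂ) • w) _ (X.smul_mem _ _ hwmem)
      ((measurable_const.indicator hSmeas).aemeasurable) ?_
    filter_upwards [hww'] with ω hw
    have habs : ‖((((m:ℝ)+1 : ℝ) : ℂ) • w) ω‖ = ((m:ℝ)+1) * ‖w' ω‖ := by
      simp only [Pi.smul_apply, smul_eq_mul, norm_mul, Complex.norm_real, Real.norm_eq_abs, hw]
      rw [_root_.abs_of_pos (by positivity : (0:ℝ) < (m:ℝ)+1)]
    by_cases h : ω ∈ S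
    · rw [Set.indicator_of_mem h, habs]
      have h2 : 1/((m:ℝ)+1) ≤ ‖w' ω‖ := (hSsub h).2
      have h3 : (0:ℝ) < (m:ℝ)+1 := by positivity
      rw [norm_one]
      rw [div_le_iff₀ h3] at h2
      nlinarith [norm_nonneg (w' ω)]
    · rw [Set.indicator_of_notMem h]
      simp [habs]
      positivity
  -- absolute continuity of the quasi-norm on subsets of G N (from order continuity)
  have habc : ∀ (N : ℕ) (θ : ℝ), 0 < θ → ∃ δ : ENNReal, 0 < δ ∧
      ∀ T : Set α, MeasurableSet T → T ⊆ G N → μ T < δ →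
        X.qnorm (T.indicator (fun _ => (1:ℂ))) < θ := by
    intro N θ hθ
    by_contra hcon
    push_neg at hcon
    have hTex : ∀ k : ℕ, ∃ T : Set α, MeasurableSet T ∧ T ⊆ G N ∧
        μ T < (2:ENNReal)⁻¹^k ∧ θ ≤ X.qnorm (T.indicator (fun _ => (1:ℂ))) := by
      intro k
      have hpos : (0:ENNReal) < (2:ENNReal)⁻¹^k := by
        apply ENNReal.pow_pos
        simp
      obtain ⟨T, h1, h2, h3, h4⟩ := hcon ((2:ENNReal)⁻¹^k) hpos
      exact ⟨T, h1, h2, h3, h4⟩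
    choose T hT1 hT2 hT3 hT4 using hTex
    set R : ℕ → Set α := fun m => ⋃ k, T (m + k) with hRdef
    have hRmeas : ∀ m, MeasurableSet (R m) := fun m => MeasurableSet.iUnion fun k => hT1 _
    have hRsub : ∀ m, R m ⊆ G N := fun m => Set.iUnion_subset fun k => hT2 _
    have hRanti : Antitone R := by
      intro m m' hmm ω hω
      obtain ⟨_, ⟨k, rfl⟩, hk⟩ := hω
      exact Set.mem_iUnion.2 ⟨m' + k - m, by
        have : m + (m' + k - m) = m' + k := by omega
        rw [this]; exact hk⟩
    have hRbound : ∀ m, μ (R m) ≤ 2 * (2:ENNReal)⁻¹^m := by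
      intro m
      refine le_trans (MeasureTheory.measure_iUnion_le _) ?_
      have h1 : ∀ k, μ (T (m+k)) ≤ (2:ENNReal)⁻¹^m * (2:ENNReal)⁻¹^k := by
        intro k
        rw [← pow_add]
        exact le_of_lt (hT3 (m+k))
      refine le_trans (ENNReal.tsum_le_tsum h1) ?_
      rw [ENNReal.tsum_mul_left, ENNReal.tsum_geometric]
      have h2 : (1 - (2:ENNReal)⁻¹)⁻¹ = 2 := by
        rw [ENNReal.one_sub_inv_two]
        simp
      rw [h2, mul_comm]
    have hRnull : μ (⋂ m, R m) = 0 := by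
      have h1 : ∀ m, μ (⋂ m, R m) ≤ 2 * (2:ENNReal)⁻¹^m := fun m =>
        le_trans (MeasureTheory.measure_mono (Set.iInter_subset _ m)) (hRbound m)
      have h2 : Tendsto (fun m : ℕ => 2 * (2:ENNReal)⁻¹^m) atTop (𝓝 0) := by
        have h3 : Tendsto (fun m : ℕ => (2:ENNReal)⁻¹^m) atTop (𝓝 0) :=
          ENNReal.tendsto_pow_atTop_nhds_zero_of_lt_one (by
            rw [ENNReal.inv_lt_one]
            exact ENNReal.one_lt_two)
        have h4 := ENNReal.Tendsto.const_mul h3 (Or.inr (by norm_num : (2:ENNReal) ≠ ⊤))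
        simpa using h4
      have := ge_of_tendsto h2 (Eventually.of_forall h1)
      simpa using this
    -- apply order continuity to the indicators of R m
    set r : ℕ → α → ℂ := fun m => (R m).indicator (fun _ => (1:ℂ)) with hrdef
    have hrmem : ∀ m, X.Mem (r m) := fun m => hχmem _ N (hRmeas m) (hRsub m)
    have hrq : Tendsto (fun m => X.qnorm (r m)) atTop (𝓝 0) := by
      refine hOC r hrmem ?_
      have hnull2 : ∀ᵐ ω ∂μ, ω ∉ ⋂ m, R m :=
        MeasureTheory.measure_eq_zero_iff_ae_notMem.1 hRnull
      filter_upwards [hnull2] with ω hω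
      constructor
      · intro m
        refine ⟨?_, ?_, ?_⟩
        · by_cases h : ω ∈ R m <;> simp [hrdef, Set.indicator_apply, h]
        · by_cases h : ω ∈ R m <;> simp [hrdef, Set.indicator_apply, h]
        · by_cases h : ω ∈ R (m+1)
          · have h2 : ω ∈ R m := hRanti (Nat.le_succ m) h
            simp [hrdef, Set.indicator_apply, h, h2]
          · by_cases h2 : ω ∈ R m <;> simp [hrdef, Set.indicator_apply, h, h2]
      · obtain ⟨m0, hm0⟩ : ∃ m0, ω ∉ R m0 := by
          by_contra hcon2
          push_neg at hcon2
          exact hω (Set.mem_iInter.2 hcon2)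
        refine tendsto_atTop_of_eventually_const (i₀ := m0) fun m hm => ?_
        have : ω ∉ R m := fun hc => hm0 (hRanti hm hc)
        simp [hrdef, Set.indicator_apply, this]
    have hlow : ∀ m, θ ≤ X.qnorm (r m) := by
      intro m
      refine le_trans (hT4 m) ?_
      refine X.lattice_qnorm _ _ (hrmem m) ?_
      refine Eventually.of_forall fun ω => ?_
      by_cases h : ω ∈ T m
      · have h2 : ω ∈ R m := Set.mem_iUnion.2 ⟨0, by simpa using h⟩
        simp [hrdef, Set.indicator_of_mem h, Set.indicator_of_mem h2]
      · simp [Set.indicator_of_notMem h]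
    have := ge_of_tendsto hrq (Eventually.of_forall hlow)
    linarith
  -- the countable candidate set
  set FD : ((Σ k : ℕ, (Fin k → ℚ × ℚ) × (Fin k → ℕ)) × ℕ) → (α → ℂ) := fun p =>
    fun ω => ∑ i : Fin p.1.1, (((p.1.2.1 i).1 : ℂ) + ((p.1.2.1 i).2 : ℂ) * Complex.I) *
      (A (p.1.2.2 i) ∩ G p.2).indicator (fun _ => (1:ℂ)) ω with hFDdef
  set D : Set (α → ℂ) := Set.range FD with hDdef
  have hDcount : D.Countable := Set.countable_range _
  have hDmem : ∀ d ∈ D, X.Mem d := by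
    rintro d ⟨p, rfl⟩
    obtain ⟨⟨k, cr, nn⟩, m⟩ := p
    have heq : FD ⟨⟨k, cr, nn⟩, m⟩ = ∑ i : Fin k,
        ((((cr i).1 : ℂ) + ((cr i).2 : ℂ) * Complex.I) •
          (A (nn i) ∩ G m).indicator (fun _ => (1:ℂ))) := by
      funext ω
      rw [Finset.sum_apply]
      simp only [hFDdef, Pi.smul_apply, smul_eq_mul]
    rw [heq]
    exact X.mem_sum _ fun i => X.smul_mem _ _
      (hχmem _ m ((hAmeas _).inter (hGmeas m)) Set.inter_subset_right)
  refine ⟨D, hDcount, hDmem, ?_⟩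
  intro f hf ε hε
  have hCq1 : 1 ≤ X.Cq := X.one_le_Cq
  have hCqpos : 0 < X.Cq := X.Cq_pos
  set f' := (X.mem_aemeasurable f hf).mk f with hf'def
  have hff' : f =ᵐ[μ] f' := (X.mem_aemeasurable f hf).ae_eq_mk
  have hf'meas : Measurable f' := (X.mem_aemeasurable f hf).measurable_mk
  have hf'mem : X.Mem f' := X.mem_congr f f' hf hff'
  set C : ℕ → Set α := fun N => {ω | ‖f' ω‖ ≤ (N:ℝ)} ∩ G N with hCdef
  have hCmeas : ∀ N, MeasurableSet (C N) := fun N =>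
    (measurableSet_le hf'meas.cabs measurable_const).inter (hGmeas N)
  have hCmono : Monotone C := by
    intro N N' h ω hω
    have h1 : ‖f' ω‖ ≤ (N:ℝ) := hω.1
    have h2 : (N:ℝ) ≤ (N':ℝ) := by exact_mod_cast h
    exact ⟨show ‖f' ω‖ ≤ (N':ℝ) from le_trans h1 h2, hGmono h hω.2⟩
  -- Step 1 : truncation, using order continuity
  set r1 : ℕ → α → ℂ := fun N ω =>
    ((‖f ω‖ * ((C N)ᶜ).indicator (fun _ => (1:ℝ)) ω : ℝ) : ℂ) with hr1def
  have hr1mem : ∀ N, X.Mem (r1 N) := by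
    intro N
    refine X.lattice_mem f _ hf ?_ ?_
    · have h1 : AEMeasurable (fun ω => ‖f ω‖) μ := by
        have := (X.mem_aemeasurable f hf).norm
        simpa using this
      have h2 : Measurable (((C N)ᶜ).indicator (fun _ => (1:ℝ))) :=
        measurable_const.indicator (hCmeas N).compl
      exact Complex.measurable_ofReal.comp_aemeasurable (h1.mul h2.aemeasurable)
    · refine Eventually.of_forall fun ω => ?_
      simp only [hr1def, Complex.norm_real, Real.norm_eq_abs]
      by_cases h : ω ∈ (C N)ᶜ
      · rw [Set.indicator_of_mem h]
        rw [mul_one, abs_of_nonneg (norm_nonneg (f ω))]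
      · rw [Set.indicator_of_notMem h]
        rw [mul_zero]
        simp [norm_nonneg]
  have hr1q : Tendsto (fun N => X.qnorm (r1 N)) atTop (𝓝 0) := by
    refine hOC r1 hr1mem ?_
    filter_upwards [hGcov, hff'] with ω hcov hfe
    have habs : ∀ N, (r1 N ω).re =
        ‖f ω‖ * ((C N)ᶜ).indicator (fun _ => (1:ℝ)) ω ∧ (r1 N ω).im = 0 := by
      intro N
      constructor <;> simp [hr1def]
    constructor
    · intro N
      refine ⟨(habs N).2, ?_, ?_⟩
      · rw [(habs N).1]
        by_cases h : ω ∈ (C N)ᶜ <;>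
          simp [Set.indicator_apply, h, norm_nonneg]
      · rw [(habs N).1, (habs (N+1)).1]
        by_cases h : ω ∈ (C (N+1))ᶜ
        · have h2 : ω ∈ (C N)ᶜ := fun hc => h (hCmono (Nat.le_succ N) hc)
          rw [Set.indicator_of_mem h, Set.indicator_of_mem h2]
        · rw [Set.indicator_of_notMem h, mul_zero]
          by_cases h2 : ω ∈ (C N)ᶜ <;>
            simp [Set.indicator_apply, h2, norm_nonneg]
    · obtain ⟨m0, hm0⟩ := hcov
      obtain ⟨N1, hN1⟩ := exists_nat_ge (‖f' ω‖)
      refine tendsto_atTop_of_eventually_const (i₀ := max m0 N1) fun N hN => ?_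
      have hωC : ω ∈ C N := by
        refine ⟨?_, hGmono (le_trans (le_max_left _ _) hN) hm0⟩
        simp only [Set.mem_setOf_eq]
        refine le_trans hN1 ?_
        exact_mod_cast le_trans (le_max_right m0 N1) hN
      rw [(habs N).1, Set.indicator_of_notMem (by simpa using hωC), mul_zero]
  set ε₁ := ε / (4 * X.Cq) with hε₁def
  have hε₁pos : 0 < ε₁ := by
    apply div_pos hε
    nlinarith
  obtain ⟨N, hN⟩ := (hr1q.eventually_lt_const hε₁pos).exists
  set g : α → ℂ := (C N).indicator f' with hgdef
  have hgmem : X.Mem g := X.mem_indicator hf'mem (hCmeas N)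
  have hfg : X.qnorm (f - g) < ε₁ := by
    refine lt_of_le_of_lt (X.lattice_qnorm (r1 N) _ (hr1mem N) ?_) hN
    filter_upwards [hff'] with ω hfe
    have h1 : (f - g) ω = f ω - (C N).indicator f' ω := rfl
    by_cases h : ω ∈ C N
    · rw [h1, Set.indicator_of_mem h, hfe, sub_self]
      simp [norm_nonneg]
    · rw [h1, Set.indicator_of_notMem h, sub_zero]
      have h2 : ω ∈ (C N)ᶜ := h
      simp only [hr1def, Complex.norm_real, Real.norm_eq_abs, Set.indicator_of_mem h2, mul_one]
      rw [abs_of_nonneg (norm_nonneg (f ω))]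
  -- Step 2a : uniform approximation by a rational simple function
  set qw := X.qnorm w with hqwdef
  have hqw0 : 0 ≤ qw := X.qnorm_nonneg w
  have hCq2pos : (0:ℝ) < X.Cq^2 := pow_pos hCqpos 2
  set ε₂ := ε / (8 * X.Cq ^ 2) with hε₂def
  have hε₂pos : 0 < ε₂ := by
    apply div_pos hε
    nlinarith
  set η := ε₂ / (((N:ℝ)+1) * (qw + 1)) with hηdef
  have hMpos : (0:ℝ) < ((N:ℝ)+1) * (qw + 1) := by nlinarith [hqw0]
  have hηpos : 0 < η := div_pos hε₂pos hMpos
  have hnet : ∃ (k : ℕ) (cr : Fin k → ℚ × ℚ), ∀ z : ℂ, ‖z‖ ≤ (N:ℝ) →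
      ∃ i : Fin k, ‖z - (((cr i).1 : ℂ) + ((cr i).2 : ℂ) * Complex.I)‖ < η := by
    have hcomp : IsCompact (Metric.closedBall (0:ℂ) N) := isCompact_closedBall _ _
    have hcov2 : Metric.closedBall (0:ℂ) N ⊆
        ⋃ p : ℚ × ℚ, Metric.ball (((p.1:ℚ):ℂ) + ((p.2:ℚ):ℂ) * Complex.I) η := by
      intro z _
      obtain ⟨p, hp⟩ := exists_rat_near z.re (by linarith : (0:ℝ) < η/2)
      obtain ⟨q, hq⟩ := exists_rat_near z.im (by linarith : (0:ℝ) < η/2)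
      refine Set.mem_iUnion.2 ⟨(p, q), ?_⟩
      rw [Metric.mem_ball, Complex.dist_eq]
      have hre : (z - ((p:ℂ) + (q:ℂ) * Complex.I)).re = z.re - p := by simp
      have him : (z - ((p:ℂ) + (q:ℂ) * Complex.I)).im = z.im - q := by simp
      calc ‖z - ((p:ℂ) + (q:ℂ) * Complex.I)‖
          ≤ |(z - ((p:ℂ) + (q:ℂ) * Complex.I)).re| + |(z - ((p:ℂ) + (q:ℂ) * Complex.I)).im| :=
            Complex.norm_le_abs_re_add_abs_im _
        _ < η := by rw [hre, him]; linarith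
    obtain ⟨s, hs⟩ := hcomp.elim_finite_subcover _ (fun p : ℚ × ℚ => Metric.isOpen_ball) hcov2
    refine ⟨s.card, fun i => (s.equivFin.symm i : ℚ × ℚ), ?_⟩
    intro z hz
    have hzmem : z ∈ Metric.closedBall (0:ℂ) N := by
      rw [Metric.mem_closedBall, Complex.dist_eq, sub_zero]
      exact hz
    have hz2 := hs hzmem
    simp only [Set.mem_iUnion, exists_prop] at hz2
    obtain ⟨p, hps, hpball⟩ := hz2
    refine ⟨s.equivFin ⟨p, hps⟩, ?_⟩
    simp only [Equiv.symm_apply_apply]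
    rw [Metric.mem_ball, Complex.dist_eq] at hpball
    exact hpball
  obtain ⟨k, cr, hcr⟩ := hnet
  set cc : Fin k → ℂ := fun i => ((cr i).1 : ℂ) + ((cr i).2 : ℂ) * Complex.I with hccdef
  set S : Fin k → Set α := fun i => C N ∩ {ω | ‖f' ω - cc i‖ < η} ∩
    ⋂ (j : Fin k), ⋂ (_ : j < i), {ω | ¬ ‖f' ω - cc j‖ < η} with hSdef
  have hSmeas : ∀ i, MeasurableSet (S i) := by
    intro i
    refine ((hCmeas N).inter ?_).inter
      (MeasurableSet.iInter fun j => MeasurableSet.iInter fun _ => ?_)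
    · exact measurableSet_lt ((hf'meas.sub measurable_const).cabs) measurable_const
    · exact (measurableSet_lt ((hf'meas.sub measurable_const).cabs) measurable_const).compl
  have hSsubC : ∀ i, S i ⊆ C N := fun i ω hω => hω.1.1
  have hSsubG : ∀ i, S i ⊆ G N := fun i ω hω => hω.1.1.2
  have hSdisj : ∀ i j, i ≠ j → ∀ ω, ω ∈ S i → ω ∈ S j → False := by
    have key : ∀ i j, i < j → ∀ ω, ω ∈ S i → ω ∈ S j → False := by
      intro i j hij ω hi hj
      exact (Set.mem_iInter.1 (Set.mem_iInter.1 hj.2 i) hij) hi.1.2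
    intro i j hij ω hi hj
    rcases lt_or_gt_of_ne hij with h | h
    · exact key i j h ω hi hj
    · exact key j i h ω hj hi
  have hScover : ∀ ω, ω ∈ C N → ∃ i, ω ∈ S i := by
    intro ω hω
    have hex : (Finset.univ.filter (fun i => ‖f' ω - cc i‖ < η)).Nonempty := by
      obtain ⟨i, hi⟩ := hcr (f' ω) hω.1
      exact ⟨i, Finset.mem_filter.2 ⟨Finset.mem_univ _, hi⟩⟩
    refine ⟨(Finset.univ.filter (fun i => ‖f' ω - cc i‖ < η)).min' hex, ?_⟩
    have h1 := Finset.min'_mem _ hex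
    rw [Finset.mem_filter] at h1
    refine ⟨⟨hω, h1.2⟩, ?_⟩
    refine Set.mem_iInter.2 fun j => Set.mem_iInter.2 fun hj => ?_
    intro hcond
    have hjmem : j ∈ Finset.univ.filter (fun i => ‖f' ω - cc i‖ < η) :=
      Finset.mem_filter.2 ⟨Finset.mem_univ j, hcond⟩
    have h2 := Finset.min'_le _ j hjmem
    exact absurd hj (not_lt.2 h2)
  set sfun : α → ℂ := ∑ i : Fin k, (cc i • (S i).indicator (fun _ => (1:ℂ))) with hsfundef
  have hsmem : X.Mem sfun :=
    X.mem_sum _ fun i => X.smul_mem _ _ (hχmem _ N (hSmeas i) (hSsubG i))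
  have hsval_mem : ∀ ω, ∀ i, ω ∈ S i → sfun ω = cc i := by
    intro ω i hi
    rw [hsfundef, Finset.sum_apply]
    rw [Finset.sum_eq_single i]
    · simp [Set.indicator_of_mem hi]
    · intro j _ hj
      have hne : ω ∉ S j := fun hc => hSdisj j i hj ω hc hi
      simp [Set.indicator_of_notMem hne]
    · intro h
      exact absurd (Finset.mem_univ i) h
  have hsval_zero : ∀ ω, ω ∉ C N → sfun ω = 0 := by
    intro ω hω
    rw [hsfundef, Finset.sum_apply]
    refine Finset.sum_eq_zero fun i _ => ?_
    have hne : ω ∉ S i := fun hc => hω (hSsubC i hc)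
    simp [Set.indicator_of_notMem hne]
  have hgs2 : X.qnorm (g - sfun) < ε₂ := by
    have hdom : ∀ᵐ ω ∂μ, ‖(g - sfun) ω‖ ≤
        ‖(((η * ((N:ℝ)+1) : ℝ) : ℂ) • w) ω‖ := by
      filter_upwards [hww'] with ω hwe
      have hrhs : ‖(((η * ((N:ℝ)+1) : ℝ) : ℂ) • w) ω‖ =
          η * ((N:ℝ)+1) * ‖w' ω‖ := by
        simp only [Pi.smul_apply, smul_eq_mul, norm_mul, Complex.norm_real, Real.norm_eq_abs, hwe]
        rw [_root_.abs_of_pos hηpos, _root_.abs_of_pos (by positivity : (0:ℝ) < (N:ℝ)+1)]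
      by_cases h : ω ∈ C N
      · obtain ⟨i, hi⟩ := hScover ω h
        have h1 : (g - sfun) ω = f' ω - cc i := by
          rw [Pi.sub_apply, hsval_mem ω i hi, hgdef, Set.indicator_of_mem h]
        rw [h1, hrhs]
        have h2 : ‖f' ω - cc i‖ < η := hi.1.2
        have h3 : 1/((N:ℝ)+1) ≤ ‖w' ω‖ := h.2.2
        have h4 : (0:ℝ) < (N:ℝ)+1 := by positivity
        rw [div_le_iff₀ h4] at h3
        nlinarith [norm_nonneg (w' ω)]
      · have h1 : (g - sfun) ω = 0 := by
          rw [Pi.sub_apply, hsval_zero ω h, hgdef, Set.indicator_of_notMem h, sub_zero]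
        rw [h1, hrhs]
        simp only [norm_zero]
        positivity
    have hlat := X.lattice_qnorm _ _ (X.smul_mem _ _ hwmem) hdom
    rw [X.qnorm_smul, Complex.norm_real, Real.norm_eq_abs,
      _root_.abs_of_pos (by positivity : (0:ℝ) < η * ((N:ℝ)+1))] at hlat
    have hkey : η * (((N:ℝ)+1) * (qw+1)) = ε₂ := div_mul_cancel₀ _ (ne_of_gt hMpos)
    have hlt : η * ((N:ℝ)+1) * qw < ε₂ := by nlinarith [mul_pos hηpos (by positivity : (0:ℝ) < (N:ℝ)+1)]
    calc X.qnorm (g - sfun) ≤ η * ((N:ℝ)+1) * qw := hlat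
      _ < ε₂ := hlt
  -- Step 2b : replace the level sets by sets from the separating sequence
  set Cqk := X.Cq ^ k with hCqkdef
  have hCqkpos : 0 < Cqk := lt_of_lt_of_le one_pos (X.one_le_Cq_pow k)
  set ε₃ := ε₂ / Cqk with hε₃def
  have hε₃pos : 0 < ε₃ := div_pos hε₂pos hCqkpos
  have happrox : ∀ i : Fin k, ∃ n : ℕ,
      X.qnorm ((S i).indicator (fun _ => (1:ℂ)) - (A n ∩ G N).indicator (fun _ => (1:ℂ)))
        < ε₃ / (((k:ℝ)+1) * (‖cc i‖ + 1)) := by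
    intro i
    have habs0 : 0 ≤ ‖cc i‖ := norm_nonneg _
    have hθpos : 0 < ε₃ / (((k:ℝ)+1) * (‖cc i‖ + 1)) := by
      apply div_pos hε₃pos
      have : (0:ℝ) < (k:ℝ)+1 := by positivity
      nlinarith
    obtain ⟨δ, hδpos, hδ⟩ := habc N _ hθpos
    obtain ⟨n, hn⟩ := hAapprox (S i) (hSmeas i)
      (lt_of_le_of_lt (MeasureTheory.measure_mono (hSsubG i)) (hGfin N)) δ hδpos
    refine ⟨n, ?_⟩
    set Ti := (symmDiff (A n) (S i)) ∩ G N with hTidef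
    have hsymm_meas : MeasurableSet (symmDiff (A n) (S i)) := by
      rw [Set.symmDiff_def]
      exact ((hAmeas n).diff (hSmeas i)).union ((hSmeas i).diff (hAmeas n))
    have hTimeas : MeasurableSet Ti := hsymm_meas.inter (hGmeas N)
    have hTisub : Ti ⊆ G N := Set.inter_subset_right
    have hTiμ : μ Ti < δ := lt_of_le_of_lt (MeasureTheory.measure_mono Set.inter_subset_left) hn
    have hq := hδ Ti hTimeas hTisub hTiμ
    refine lt_of_le_of_lt
      (X.lattice_qnorm (Ti.indicator fun _ => (1:ℂ)) _ (hχmem _ N hTimeas hTisub) ?_) hq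
    refine Eventually.of_forall fun ω => ?_
    by_cases h1 : ω ∈ S i <;> by_cases h2 : ω ∈ A n ∩ G N
    · simp [Set.indicator_of_mem h1, Set.indicator_of_mem h2, norm_nonneg]
    · have hωG : ω ∈ G N := hSsubG i h1
      have hωA : ω ∉ A n := fun hc => h2 ⟨hc, hωG⟩
      have hωTi : ω ∈ Ti := ⟨Set.mem_symmDiff.2 (Or.inr ⟨h1, hωA⟩), hωG⟩
      simp [Set.indicator_of_mem h1, Set.indicator_of_notMem h2, Set.indicator_of_mem hωTi]
    · have hωTi : ω ∈ Ti := ⟨Set.mem_symmDiff.2 (Or.inl ⟨h2.1, h1⟩), h2.2⟩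
      simp [Set.indicator_of_notMem h1, Set.indicator_of_mem h2, Set.indicator_of_mem hωTi]
    · simp [Set.indicator_of_notMem h1, Set.indicator_of_notMem h2, norm_nonneg]
  choose nn hnn using happrox
  set d : α → ℂ := FD ⟨⟨k, cr, nn⟩, N⟩ with hddef
  have hdD : d ∈ D := ⟨_, rfl⟩
  have hdsum : d = ∑ i : Fin k, (cc i • (A (nn i) ∩ G N).indicator (fun _ => (1:ℂ))) := by
    funext ω
    rw [hddef, Finset.sum_apply]
    simp only [hFDdef, hccdef, Pi.smul_apply, smul_eq_mul]
  have hdmem : X.Mem d := hDmem d hdD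
  have hsd : sfun - d = ∑ i : Fin k,
      (cc i • ((S i).indicator (fun _ => (1:ℂ)) - (A (nn i) ∩ G N).indicator (fun _ => (1:ℂ)))) := by
    rw [hsfundef, hdsum, ← Finset.sum_sub_distrib]
    congr 1
    funext i
    rw [smul_sub]
  have hqsd : X.qnorm (sfun - d) < ε₂ := by
    rw [hsd]
    have hvmem : ∀ i : Fin k, X.Mem
        (cc i • ((S i).indicator (fun _ => (1:ℂ)) - (A (nn i) ∩ G N).indicator (fun _ => (1:ℂ)))) :=
      fun i => X.smul_mem _ _ (X.mem_sub (hχmem _ N (hSmeas i) (hSsubG i))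
        (hχmem _ N ((hAmeas _).inter (hGmeas N)) Set.inter_subset_right))
    refine lt_of_le_of_lt (X.qnorm_sum_le _ hvmem) ?_
    have hk1 : (0:ℝ) < (k:ℝ)+1 := by positivity
    have hterm : ∀ i : Fin k, X.qnorm
        (cc i • ((S i).indicator (fun _ => (1:ℂ)) - (A (nn i) ∩ G N).indicator (fun _ => (1:ℂ))))
        ≤ ε₃ / ((k:ℝ)+1) := by
      intro i
      rw [X.qnorm_smul]
      have habs0 : 0 ≤ ‖cc i‖ := norm_nonneg _
      have h2 := mul_le_mul_of_nonneg_left (le_of_lt (hnn i)) habs0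
      refine le_trans h2 ?_
      have hM2 : (0:ℝ) < ((k:ℝ)+1) * (‖cc i‖ + 1) := by nlinarith
      rw [← mul_div_assoc, div_le_div_iff₀ hM2 hk1]
      nlinarith [mul_nonneg habs0 hε₃pos.le, hε₃pos.le]
    have hsum : (∑ i : Fin k, X.qnorm
        (cc i • ((S i).indicator (fun _ => (1:ℂ)) - (A (nn i) ∩ G N).indicator (fun _ => (1:ℂ)))))
        ≤ (k:ℝ) * (ε₃ / ((k:ℝ)+1)) := by
      calc (∑ i : Fin k, X.qnorm
          (cc i • ((S i).indicator (fun _ => (1:ℂ)) - (A (nn i) ∩ G N).indicator (fun _ => (1:ℂ)))))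
          ≤ ∑ _i : Fin k, ε₃ / ((k:ℝ)+1) := Finset.sum_le_sum fun i _ => hterm i
        _ = (k:ℝ) * (ε₃ / ((k:ℝ)+1)) := by
            rw [Finset.sum_const, Finset.card_univ, Fintype.card_fin, nsmul_eq_mul]
    have hlt2 : (k:ℝ) * (ε₃ / ((k:ℝ)+1)) < ε₃ := by
      rw [← mul_div_assoc, div_lt_iff₀ hk1]
      nlinarith
    calc X.Cq ^ k * (∑ i : Fin k, X.qnorm
        (cc i • ((S i).indicator (fun _ => (1:ℂ)) - (A (nn i) ∩ G N).indicator (fun _ => (1:ℂ)))))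
        ≤ X.Cq ^ k * ((k:ℝ) * (ε₃ / ((k:ℝ)+1))) := by
          refine mul_le_mul_of_nonneg_left hsum ?_
          have := X.one_le_Cq_pow k
          linarith
      _ < X.Cq ^ k * ε₃ := by
          refine mul_lt_mul_of_pos_left hlt2 ?_
          exact hCqkpos
      _ = ε₂ := by
          rw [hε₃def, ← hCqkdef]
          have hne : Cqk ≠ 0 := ne_of_gt hCqkpos
          rw [mul_comm, div_mul_cancel₀ _ hne]
  -- assembly
  have hgd : X.qnorm (g - d) ≤ ε / (4 * X.Cq) := by
    have h1 := X.qnorm_sub_le g sfun d hgmem hsmem hdmem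
    have h2 : X.qnorm (g - sfun) + X.qnorm (sfun - d) ≤ 2 * ε₂ := by linarith
    have hCne : X.Cq ≠ 0 := ne_of_gt hCqpos
    calc X.qnorm (g - d) ≤ X.Cq * (X.qnorm (g - sfun) + X.qnorm (sfun - d)) := h1
      _ ≤ X.Cq * (2 * ε₂) := mul_le_mul_of_nonneg_left h2 (le_of_lt hCqpos)
      _ = ε / (4 * X.Cq) := by
          rw [hε₂def]
          field_simp
          ring
  refine ⟨d, hdD, ?_⟩
  have h1 := X.qnorm_sub_le f g d hf hgmem hdmem
  have h2 : X.qnorm (f - g) + X.qnorm (g - d) < ε₁ + ε / (4 * X.Cq) :=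
    add_lt_add_of_lt_of_le hfg hgd
  have hCne : X.Cq ≠ 0 := ne_of_gt hCqpos
  have h3 : X.Cq * (ε₁ + ε / (4 * X.Cq)) = ε / 2 := by
    rw [hε₁def]
    field_simp
    ring
  calc X.qnorm (f - d) ≤ X.Cq * (X.qnorm (f - g) + X.qnorm (g - d)) := h1
    _ < X.Cq * (ε₁ + ε / (4 * X.Cq)) := mul_lt_mul_of_pos_left h2 hCqpos
    _ = ε / 2 := h3
    _ < ε := by linarith

/-- Over a separable σ-finite measure space, a quasi-Banach function space is
separable if and only if it is order continuous. -/
theorem qbfs_separable_iff_order_continuous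
    [MeasureTheory.SigmaFinite μ] (hμ : MeasSeparable μ) (X : QBFS α μ) :
    SeparableFS X.Mem X.qnorm ↔ OrderContFS μ X.Mem X.qnorm := by
  exact ⟨fun h => orderCont_of_separable X h, fun h => separable_of_orderCont hμ X h⟩
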